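/- For any nonzero univariate real polynomial f, the number of sign changes in the coefficient sequence of (x+1)·f(x) is at most the number of sign changes in the coefficient sequence of f. -/

import Mathlib

open Polynomial

/-- Number of sign changes in the coefficient sequence, disregarding zeros. -/
noncomputable def signVar (p : Polynomial ℝ) : ℕ :=
  let l := (((List.range (p.natDegree + 1)).map fun i => p.coeff i).filter fun a => a ≠ 0)
  (l.zip l.tail).countP fun q => q.1 * q.2 < 0

/-- Substitution y = x + 1 into a bivariate polynomial. -/
noncomputable def subXX1 (f : MvPolynomial (Fin 2) ℝ) : Polynomial ℝ :=
  MvPolynomial.aeval ![Polynomial.X, Polynomial.X + 1] f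

/-- `T3 d h = (x+1)^d * h(-x/(x+1))` as a polynomial. -/
noncomputable def T3 (d : ℕ) (h : Polynomial ℝ) : Polynomial ℝ :=
  ∑ i ∈ Finset.range (d + 1),
    Polynomial.C (h.coeff i) * (-Polynomial.X) ^ i * (Polynomial.X + 1) ^ (d - i)

noncomputable def VI1 (h : Polynomial ℝ) : ℕ := signVar h
noncomputable def VI2 (h : Polynomial ℝ) : ℕ := signVar (h.comp (-1 - Polynomial.X))
noncomputable def VI3 (h : Polynomial ℝ) : ℕ := signVar (T3 h.natDegree h)

namespace Stmt0Aux

noncomputable def countV : ℝ → List ℝ → ℕ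
  | _, [] => 0
  | s, x :: l => if x = 0 then countV s l else (if s * x < 0 then 1 else 0) + countV x l

noncomputable def addList : ℝ → List ℝ → List ℝ
  | p, [] => [p]
  | p, x :: l => (p + x) :: addList x l

def Inv (t s p : ℝ) : Prop :=
  (p ≠ 0 → p * t > 0 ∧ s ≠ 0) ∧ (p = 0 → s * t > 0 ∨ (s = 0 ∧ t = 0))

/-- if a*b > 0 and a*c < 0 then b*c < 0 -/
lemma sign_flip {a b c : ℝ} (h1 : a * b > 0) (h2 : a * c < 0) : b * c < 0 := by
  nlinarith [mul_pos h1 (neg_pos.2 h2), sq_nonneg a]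

lemma step_inv (t s p x : ℝ) (h : Inv t s p) :
    Inv (if x = 0 then t else x) (if p + x = 0 then s else p + x) x := by
  obtain ⟨h1, h2⟩ := h
  constructor
  · intro hx
    rw [if_neg hx]
    refine ⟨mul_self_pos.2 hx, ?_⟩
    rcases eq_or_ne (p + x) 0 with hy | hy
    · rw [if_pos hy]
      rcases eq_or_ne p 0 with hp | hp
      · exact absurd (by linarith) hx
      · exact (h1 hp).2
    · rw [if_neg hy]; exact hy
  · intro hx
    subst hx
    rcases eq_or_ne p 0 with hp | hp
    · subst hp
      simp only [add_zero, if_pos rfl]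
      exact h2 rfl
    · rw [if_pos rfl, add_zero, if_neg hp]
      left
      exact (h1 hp).1

lemma step_ineq (t s p x : ℝ) (h : Inv t s p) :
    (if s * (p + x) < 0 then 1 else 0) + (if (if p + x = 0 then s else p + x) * x < 0 then 1 else 0)
      ≤ (if t * x < 0 then 1 else 0) + (if s * p < 0 then 1 else 0) := by
  obtain ⟨h1, h2⟩ := h
  rcases eq_or_ne p 0 with hp | hp
  · subst hp
    simp only [zero_add, mul_zero, add_zero]
    rcases eq_or_ne x 0 with hx | hx
    · subst hx; norm_num
    · rw [if_neg hx, if_neg (not_lt.2 (mul_self_pos.2 hx).le),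
        if_neg (by norm_num : ¬ (0:ℝ) < 0)]
      rcases h2 rfl with hst | ⟨hs, ht⟩
      · rcases lt_or_ge (s * x) 0 with hsx | hsx
        · rw [if_pos hsx, if_pos (sign_flip hst hsx)]
        · rw [if_neg (not_lt.2 hsx)]; omega
      · subst hs
        rw [if_neg (by norm_num : ¬ (0:ℝ) * x < 0)]; omega
  · obtain ⟨hpt, hs⟩ := h1 hp
    rcases eq_or_ne (p + x) 0 with hy | hy
    · have hx : x = -p := by linarith
      subst hx
      rw [if_pos hy, if_neg (show ¬ s * (p + -p) < 0 by rw [hy, mul_zero]; norm_num)]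
      rcases lt_or_ge (s * (-p)) 0 with hsx | hsx
      · rw [if_pos hsx]
        have htx : t * (-p) < 0 := by nlinarith
        rw [if_pos htx]; omega
      · rw [if_neg (not_lt.2 hsx)]; omega
    · rw [if_neg hy]
      have c1 : (p + x) * x < 0 → t * x < 0 := by
        intro hB
        have hpx : p * x < 0 := by nlinarith [sq_nonneg x]
        exact sign_flip hpt hpx
      have c3 : s * (p + x) < 0 → (p + x) * x < 0 → s * p < 0 := by
        intro hA hB
        have hsx : 0 < s * x := by
          nlinarith [mul_pos_of_neg_of_neg hA hB, sq_nonneg (p + x)]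
        nlinarith
      have c2 : s * (p + x) < 0 → ¬ s * p < 0 → t * x < 0 := by
        intro hA hD
        have hsp : 0 < s * p := lt_of_le_of_ne (not_lt.1 hD) (Ne.symm (mul_ne_zero hs hp))
        have hsx : s * x < 0 := by nlinarith
        have hpx : p * x < 0 := sign_flip hsp hsx
        exact sign_flip hpt hpx
      by_cases hA : s * (p + x) < 0 <;> by_cases hB : (p + x) * x < 0
      · rw [if_pos hA, if_pos hB, if_pos (c1 hB), if_pos (c3 hA hB)]
      · by_cases hD : s * p < 0
        · rw [if_pos hA, if_neg hB, if_pos hD]; omega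
        · rw [if_pos hA, if_neg hB, if_pos (c2 hA hD), if_neg hD]
      · rw [if_neg hA, if_pos hB, if_pos (c1 hB)]; omega
      · rw [if_neg hA, if_neg hB]; omega

lemma key : ∀ (l : List ℝ) (t s p : ℝ), Inv t s p →
    countV s (addList p l) ≤ countV t l + (if s * p < 0 then 1 else 0)
  | [], t, s, p, _ => by
    simp only [addList, countV]
    rcases eq_or_ne p 0 with hp | hp
    · rw [if_pos hp]; omega
    · rw [if_neg hp]; omega
  | x :: l, t, s, p, h => by
    have ih := key l (if x = 0 then t else x) (if p + x = 0 then s else p + x) x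
      (step_inv t s p x h)
    have si := step_ineq t s p x h
    simp only [addList, countV]
    rcases eq_or_ne (p + x) 0 with hy | hy <;> rcases eq_or_ne x 0 with hx | hx
    · rw [if_pos hy, if_pos hx]
      rw [if_pos hy, if_pos hx] at ih
      have hb : ¬ s * x < 0 := by rw [hx, mul_zero]; exact lt_irrefl 0
      rw [if_neg hb] at ih
      omega
    · rw [if_pos hy, if_neg hx]
      rw [if_pos hy, if_neg hx] at ih
      rw [if_pos hy] at si
      have hf : ¬ s * (p + x) < 0 := by rw [hy, mul_zero]; exact lt_irrefl 0
      rw [if_neg hf] at si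
      omega
    · rw [if_neg hy, if_pos hx]
      rw [if_neg hy, if_pos hx] at ih
      rw [if_neg hy] at si
      have hx0 : ¬ t * x < 0 := by rw [hx, mul_zero]; exact lt_irrefl 0
      have hb : ¬ (p + x) * x < 0 := by rw [hx, mul_zero]; exact lt_irrefl 0
      rw [if_neg hx0, if_neg hb] at si
      rw [if_neg hb] at ih
      omega
    · rw [if_neg hy, if_neg hx]
      rw [if_neg hy, if_neg hx] at ih
      rw [if_neg hy] at si
      omega

lemma countV_filter : ∀ (l : List ℝ) (s : ℝ),
    countV s (List.filter (fun a => a ≠ 0) l) = countV s l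
  | [], _ => rfl
  | x :: l, s => by
    by_cases hx : x = 0
    · rw [List.filter_cons_of_neg (by simpa using hx)]
      simp only [countV, if_pos hx]
      exact countV_filter l s
    · rw [List.filter_cons_of_pos (by simpa using hx)]
      simp only [countV, if_neg hx]
      rw [countV_filter l x]

lemma zip_count : ∀ (l : List ℝ) (x : ℝ), (∀ y ∈ l, y ≠ 0) →
    (((x :: l).zip l).countP fun q => q.1 * q.2 < 0) = countV x l
  | [], _, _ => rfl
  | y :: l, x, hl => by
    have hy : y ≠ 0 := hl y (List.mem_cons_self)
    have hrec := zip_count l y (fun z hz => hl z (List.mem_cons_of_mem _ hz))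
    simp only [List.zip_cons_cons, List.countP_cons, countV, if_neg hy, hrec]
    by_cases h : x * y < 0 <;> simp [h] <;> omega

lemma signVar_eq (p : Polynomial ℝ) :
    signVar p = countV 0 ((List.range (p.natDegree + 1)).map p.coeff) := by
  set A := (List.range (p.natDegree + 1)).map p.coeff with hA
  set F := A.filter (fun a => a ≠ 0) with hF
  have h1 : signVar p = ((F.zip F.tail).countP fun q => q.1 * q.2 < 0) := rfl
  have hmem : ∀ y ∈ F, y ≠ 0 := by
    intro y hy
    have := (List.mem_filter.1 hy).2
    simpa using this
  rw [h1, ← countV_filter A 0, ← hF]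
  rcases hFe : F with _ | ⟨x, m⟩
  · simp [countV]
  · have hx : x ≠ 0 := hmem x (by rw [hFe]; exact List.mem_cons_self)
    have hm : ∀ y ∈ m, y ≠ 0 := fun y hy => hmem y (by rw [hFe]; exact List.mem_cons_of_mem _ hy)
    simp only [List.tail_cons]
    rw [zip_count m x hm]
    simp [countV, hx]

lemma addList_eq_zipWith : ∀ (l : List ℝ) (p : ℝ),
    addList p l = List.zipWith (· + ·) (p :: l) (l ++ [0])
  | [], p => by simp [addList]
  | x :: l, p => by simp [addList, addList_eq_zipWith l x]

lemma coeff_list (f : Polynomial ℝ) (hf : f ≠ 0) :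
    (List.range (((X + 1) * f).natDegree + 1)).map ((X + 1) * f).coeff
      = addList 0 ((List.range (f.natDegree + 1)).map f.coeff) := by
  have hX : (X + 1 : Polynomial ℝ) ≠ 0 := by
    intro h
    have := congrArg (fun q => Polynomial.coeff q 1) h
    simp [Polynomial.coeff_one] at this
  have hXdeg : (X + 1 : Polynomial ℝ).natDegree = 1 := by
    have := natDegree_X_add_C (1 : ℝ)
    simpa using this
  have hdeg : ((X + 1) * f).natDegree = f.natDegree + 1 := by
    rw [natDegree_mul hX hf, hXdeg]; ring
  have hco0 : ((X + 1) * f).coeff 0 = f.coeff 0 := by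
    rw [add_mul, one_mul, coeff_add, mul_comm, coeff_mul_X_zero, zero_add]
  have hco : ∀ i : ℕ, ((X + 1) * f).coeff (i + 1) = f.coeff i + f.coeff (i + 1) := by
    intro i
    rw [add_mul, one_mul, coeff_add, coeff_X_mul]
  rw [addList_eq_zipWith]
  apply List.ext_getElem
  · simp [hdeg]
  · intro i h1 h2
    simp only [List.getElem_map, List.getElem_range]
    rw [List.getElem_zipWith]
    rcases i with _ | j
    · rw [hco0, List.getElem_cons_zero,
        List.getElem_append_left (by simp : 0 < (List.map f.coeff (List.range (f.natDegree + 1))).length)]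
      simp
    · rw [hco, List.getElem_cons_succ, List.getElem_map, List.getElem_range]
      by_cases hj : j + 1 < f.natDegree + 1
      · rw [List.getElem_append_left (by simpa using hj)]
        simp
      · have hlen : j < f.natDegree + 1 := by
          simp only [List.length_zipWith, List.length_cons, List.length_map,
            List.length_range, List.length_append, List.length_singleton] at h2
          omega
        have hjn : j = f.natDegree := by omega
        rw [List.getElem_append_right (by simp; omega)]
        subst hjn
        have hz : f.coeff (f.natDegree + 1) = 0 :=
          coeff_eq_zero_of_natDegree_lt (by omega)
        simp [hz]

end Stmt0Aux

theorem stmt0 (f : Polynomial ℝ) (hf : f ≠ 0) :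
    signVar ((Polynomial.X + 1) * f) ≤ signVar f := by
  rw [Stmt0Aux.signVar_eq, Stmt0Aux.signVar_eq, Stmt0Aux.coeff_list f hf]
  have h := Stmt0Aux.key ((List.range (f.natDegree + 1)).map f.coeff) 0 0 0
    ⟨fun h => absurd rfl h, fun _ => Or.inr ⟨rfl, rfl⟩⟩
  simpa using h
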